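/- Density-invariance of the coverage expression: with the substitution t = πλ_B x², the integrand Z(x) f(x) [L(x)]^{K-1} of Theorem 1, where Z(x) = exp(−ηTn(A x^{α(1−ε)} + B x^{2α(1−ε)})/M) with A, B proportional to (πλ_B)^{−α(1−ε)/2} and (πλ_B)^{−α(1−ε)} respectively (via P_ω I_ω with D = c/√λ_B), becomes a function of t alone, independent of λ_B. -/
import Mathlib


open Real

lemma coverage_density_key (ω α ε c : ℝ) (hc : 0 < c) (lam t : ℝ) (hl : 0 < lam) (ht : 0 < t) :
    (lam * π) ^ (-(α * ε * ω) / 2) * Real.Gamma (α * ε * ω / 2 + 1)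
      * (2 * π * lam / (ω * α - 2) * (c / Real.sqrt lam) ^ (2 - ω * α))
      * (Real.sqrt (t / (π * lam))) ^ (ω * α * (1 - ε))
    = Real.Gamma (α * ε * ω / 2 + 1) * (2 * π / (ω * α - 2)) * c ^ (2 - ω * α)
      * π ^ (-(α * ε * ω) / 2) * t ^ ((1:ℝ)/2 * (ω * α * (1 - ε)))
      / π ^ ((1:ℝ)/2 * (ω * α * (1 - ε))) := by
  have hπ := Real.pi_pos
  have hlam : lam ^ (-(α * ε * ω) / 2) * lam / lam ^ ((1:ℝ)/2 * (2 - ω * α))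
      / lam ^ ((1:ℝ)/2 * (ω * α * (1 - ε))) = 1 := by
    rw [← Real.rpow_add_one hl.ne' (-(α * ε * ω) / 2), ← Real.rpow_sub hl,
        ← Real.rpow_sub hl,
        show -(α * ε * ω) / 2 + 1 - 1/2 * (2 - ω * α) - 1/2 * (ω * α * (1 - ε)) = (0:ℝ) by ring,
        Real.rpow_zero]
  have expand : (lam * π) ^ (-(α * ε * ω) / 2) * Real.Gamma (α * ε * ω / 2 + 1)
      * (2 * π * lam / (ω * α - 2) * (c / Real.sqrt lam) ^ (2 - ω * α))
      * (Real.sqrt (t / (π * lam))) ^ (ω * α * (1 - ε))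
      = Real.Gamma (α * ε * ω / 2 + 1) * (2 * π / (ω * α - 2)) * c ^ (2 - ω * α)
        * π ^ (-(α * ε * ω) / 2) * t ^ ((1:ℝ)/2 * (ω * α * (1 - ε)))
        / π ^ ((1:ℝ)/2 * (ω * α * (1 - ε)))
        * (lam ^ (-(α * ε * ω) / 2) * lam / lam ^ ((1:ℝ)/2 * (2 - ω * α))
           / lam ^ ((1:ℝ)/2 * (ω * α * (1 - ε)))) := by
    rw [Real.div_rpow hc.le (Real.sqrt_nonneg lam), Real.sqrt_eq_rpow lam,
        ← Real.rpow_mul hl.le, Real.sqrt_eq_rpow,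
        ← Real.rpow_mul (by positivity), Real.div_rpow ht.le (by positivity),
        Real.mul_rpow hπ.le hl.le, Real.mul_rpow hl.le hπ.le]
    ring
  rw [expand, hlam, mul_one]

/-- Density-invariance of the coverage expression: with `P_ω(λ) = (λπ)^{-αεω/2} Γ(αεω/2+1)`,
`I_ω(λ) = (2πλ/(ωα-2)) D^{2-ωα}` for guard radius `D = c/√λ` (so `D` scales as `λ^{-1/2}`),
the product `P_ω(λ) I_ω(λ) x^{ωα(1-ε)}` expressed at `x = √(t/(πλ))` depends on `λ` only
through `t`, i.e. it is the same for any two densities `λ₁, λ₂ > 0`. Hence the coverage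
probability of Theorem 1 does not depend on the BS density. -/
theorem coverage_density_invariance (ω : ℝ) (hω : ω = 1 ∨ ω = 2) (α ε c : ℝ)
    (hα : 2 < α) (hε₀ : 0 ≤ ε) (hε₁ : ε ≤ 1) (hωα : 2 < ω * α) (hc : 0 < c)
    (P I : ℝ → ℝ)
    (hP : ∀ lam, P lam = (lam * π) ^ (-(α * ε * ω) / 2) * Real.Gamma (α * ε * ω / 2 + 1))
    (hI : ∀ lam, I lam = 2 * π * lam / (ω * α - 2) * (c / Real.sqrt lam) ^ (2 - ω * α))
    (lam₁ lam₂ t : ℝ) (h₁ : 0 < lam₁) (h₂ : 0 < lam₂) (ht : 0 < t) :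
    P lam₁ * I lam₁ * (Real.sqrt (t / (π * lam₁))) ^ (ω * α * (1 - ε))
      = P lam₂ * I lam₂ * (Real.sqrt (t / (π * lam₂))) ^ (ω * α * (1 - ε)) := by
  rw [hP, hP, hI, hI, coverage_density_key ω α ε c hc lam₁ t h₁ ht,
      coverage_density_key ω α ε c hc lam₂ t h₂ ht]
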